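/- Let 1 ≤ n < d and write x = x_H + x_V ∈ ℝ^d, where x_H is the projection onto the first n coordinates and x_V onto the last d−n coordinates. Let 0 < s < 1 and suppose x, y ∈ ℝ^d \ {0} satisfy |x_V| ≤ s|x_H|, |y_V| ≤ s|y_H|, and |x_V − y_V| ≤ s|x_H − y_H|. Then there exists a constant C > 0 depending only on s such that |x_V − y_V| ≤ C | (|x|/|x_H|) x_H − (|y|/|y_H|) y_H |. -/

import Mathlib

open Metric

/-- Projection of `x ∈ ℝ^d` onto the first `n` coordinates (viewed inside `ℝ^d`). -/
noncomputable def horiz (n d : ℕ) (x : EuclideanSpace ℝ (Fin d)) : EuclideanSpace ℝ (Fin d) :=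
  (WithLp.equiv 2 (Fin d → ℝ)).symm (fun i => if (i : ℕ) < n then x i else 0)

/-- Projection of `x ∈ ℝ^d` onto the last `d - n` coordinates (viewed inside `ℝ^d`). -/
noncomputable def vert (n d : ℕ) (x : EuclideanSpace ℝ (Fin d)) : EuclideanSpace ℝ (Fin d) :=
  (WithLp.equiv 2 (Fin d → ℝ)).symm (fun i => if (i : ℕ) < n then 0 else x i)

lemma horiz_add_vert (n d : ℕ) (x : EuclideanSpace ℝ (Fin d)) :
    horiz n d x + vert n d x = x := by
  ext i
  simp only [horiz, vert, WithLp.equiv_symm_apply, PiLp.toLp_apply, PiLp.add_apply]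
  split <;> simp

lemma inner_horiz_vert (n d : ℕ) (x y : EuclideanSpace ℝ (Fin d)) :
    (inner ℝ (horiz n d x) (vert n d y) : ℝ) = 0 := by
  rw [PiLp.inner_apply]
  apply Finset.sum_eq_zero
  intro i _
  simp only [horiz, vert, WithLp.equiv_symm_apply, PiLp.toLp_apply, RCLike.inner_apply, starRingEnd_apply]
  split <;> simp

/-- Pure real-arithmetic core of Lemma 2.4. -/
lemma stmt2_aux (s nx ny α β nu nv L D c R : ℝ)
    (hs0 : 0 < s) (hs1 : s < 1)
    (hα : 0 < α) (hβ : 0 < β)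
    (hLnn : 0 ≤ L) (hRnn : 0 ≤ R)
    (hnxnn : 0 ≤ nx) (hnynn : 0 ≤ ny) (hnunn : 0 ≤ nu) (hnvnn : 0 ≤ nv)
    (hx2 : nx ^ 2 = α ^ 2 + nu ^ 2) (hy2 : ny ^ 2 = β ^ 2 + nv ^ 2)
    (hD2 : D ^ 2 = α ^ 2 - 2 * c + β ^ 2)
    (hCS : c ≤ α * β)
    (hR2 : R ^ 2 = nx ^ 2 + ny ^ 2 - 2 * ((nx * ny) / (α * β)) * c)
    (hxs : nu ≤ s * α) (hys : nv ≤ s * β) (hxys : L ≤ s * D)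
    (habD : |α - β| ≤ D) (hFL : |nu - nv| ≤ L) :
    L ≤ 3 / (1 - s ^ 2) * R := by
  have hss : s * s < 1 * 1 := mul_lt_mul'' hs1 hs1 hs0.le hs0.le
  have h1s2 : 0 < 1 - s ^ 2 := by nlinarith [hss]
  have hnuα : nu ≤ α := hxs.trans (mul_le_of_le_one_left hα.le hs1.le)
  have hnvβ : nv ≤ β := hys.trans (mul_le_of_le_one_left hβ.le hs1.le)
  have hnxα : α ≤ nx := le_of_pow_le_pow_left₀ two_ne_zero hnxnn (by linarith [sq_nonneg nu])
  have hnyβ : β ≤ ny := le_of_pow_le_pow_left₀ two_ne_zero hnynn (by linarith [sq_nonneg nv])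
  have hnx2 : nx ≤ 2 * α := le_of_pow_le_pow_left₀ two_ne_zero (by positivity)
    (by linarith [pow_le_pow_left₀ hnunn hnuα 2, sq_nonneg α])
  have hny2 : ny ≤ 2 * β := le_of_pow_le_pow_left₀ two_ne_zero (by positivity)
    (by linarith [pow_le_pow_left₀ hnvnn hnvβ 2, sq_nonneg β])
  have ht1 : 1 ≤ (nx * ny) / (α * β) := by
    rw [le_div_iff₀ (by positivity), one_mul]
    exact mul_le_mul hnxα hnyβ hβ.le hnxnn
  have ht2 : ((nx * ny) / (α * β)) * (α * β) = nx * ny := by field_simp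
  have kd : (nx - ny) ^ 2 + (D ^ 2 - (α - β) ^ 2) ≤ R ^ 2 := by
    linarith [mul_nonneg (sub_nonneg.mpr ht1) (sub_nonneg.mpr hCS), ht2]
  set G := Real.sqrt (D ^ 2 - (α - β) ^ 2) with hG
  have hGarg : 0 ≤ D ^ 2 - (α - β) ^ 2 := by
    linarith [pow_le_pow_left₀ (abs_nonneg (α - β)) habD 2, sq_abs (α - β)]
  have hG0 : 0 ≤ G := Real.sqrt_nonneg _
  have hG2 : G ^ 2 = D ^ 2 - (α - β) ^ 2 := Real.sq_sqrt hGarg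
  have hDle : D ≤ |α - β| + G :=
    le_of_pow_le_pow_left₀ two_ne_zero (by positivity)
      (by linarith [sq_abs (α - β), mul_nonneg (abs_nonneg (α - β)) hG0])
  have hHleR : |nx - ny| ≤ R :=
    le_of_pow_le_pow_left₀ two_ne_zero hRnn (by linarith [sq_abs (nx - ny)])
  have hGleR : G ≤ R :=
    le_of_pow_le_pow_left₀ two_ne_zero hRnn (by linarith [sq_nonneg (nx - ny)])
  have hαβ : (0:ℝ) < α + β := by positivity
  have key : |α - β| * (α + β) ≤ (2 * |nx - ny| + s * L) * (α + β) := by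
    have e0 : (α - β) * (α + β) = (nx - ny) * (nx + ny) - (nu - nv) * (nu + nv) := by
      linear_combination hy2 - hx2
    calc |α - β| * (α + β) = |(α - β) * (α + β)| := by
          rw [abs_mul, abs_of_nonneg hαβ.le]
      _ = |(nx - ny) * (nx + ny) - (nu - nv) * (nu + nv)| := by rw [e0]
      _ ≤ |(nx - ny) * (nx + ny)| + |(nu - nv) * (nu + nv)| := abs_sub _ _
      _ = |nx - ny| * (nx + ny) + |nu - nv| * (nu + nv) := by
          rw [abs_mul, abs_mul, abs_of_nonneg (show (0:ℝ) ≤ nx + ny by linarith),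
            abs_of_nonneg (show (0:ℝ) ≤ nu + nv by linarith)]
      _ ≤ (2 * |nx - ny| + s * L) * (α + β) := by
          have t1 : |nx - ny| * (nx + ny) ≤ |nx - ny| * (2 * (α + β)) :=
            mul_le_mul_of_nonneg_left (by linarith) (abs_nonneg _)
          have t2 : |nu - nv| * (nu + nv) ≤ L * (s * (α + β)) :=
            mul_le_mul hFL (by linarith) (by linarith) hLnn
          linarith [t1, t2]
  have h5 : |α - β| ≤ 2 * |nx - ny| + s * L := le_of_mul_le_mul_right key hαβ
  have q2 : s * D ≤ s * (|α - β| + G) := mul_le_mul_of_nonneg_left hDle hs0.le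
  have q3 : s * (|α - β| + G) ≤ s * (2 * |nx - ny| + s * L + G) :=
    mul_le_mul_of_nonneg_left (by linarith) hs0.le
  have q4 : s * |nx - ny| ≤ s * R := mul_le_mul_of_nonneg_left hHleR hs0.le
  have q5 : s * G ≤ s * R := mul_le_mul_of_nonneg_left hGleR hs0.le
  have final : L * (1 - s ^ 2) ≤ 3 * R := by
    linarith [mul_nonneg (sub_nonneg.mpr hs1.le) hRnn]
  rw [div_mul_eq_mul_div, le_div_iff₀ h1s2]
  linarith

/-- Lemma 2.4: given `0 < s < 1`, there is `C > 0` depending only on `s`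
such that for all `1 ≤ n < d` and all nonzero `x, y ∈ ℝ^d` with `|x_V| ≤ s|x_H|`,
`|y_V| ≤ s|y_H|` and `|x_V − y_V| ≤ s|x_H − y_H|`, one has
`|x_V − y_V| ≤ C·|(|x|/|x_H|)x_H − (|y|/|y_H|)y_H|`. -/
theorem stmt2 (s : ℝ) (hs0 : 0 < s) (hs1 : s < 1) :
    ∃ C > 0, ∀ (n d : ℕ), 1 ≤ n → n < d →
      ∀ x y : EuclideanSpace ℝ (Fin d), x ≠ 0 → y ≠ 0 →
        ‖vert n d x‖ ≤ s * ‖horiz n d x‖ →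
        ‖vert n d y‖ ≤ s * ‖horiz n d y‖ →
        ‖vert n d x - vert n d y‖ ≤ s * ‖horiz n d x - horiz n d y‖ →
        ‖vert n d x - vert n d y‖
          ≤ C * ‖(‖x‖ / ‖horiz n d x‖) • horiz n d x - (‖y‖ / ‖horiz n d y‖) • horiz n d y‖ := by
  have h1s2 : 0 < 1 - s ^ 2 := by nlinarith
  refine ⟨3 / (1 - s ^ 2), by positivity, ?_⟩
  intro n d hn hnd x y hx hy hxs hys hxys
  set a := horiz n d x with ha
  set u := vert n d x with hu
  set b := horiz n d y with hb
  set v := vert n d y with hv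
  have hxa : a + u = x := horiz_add_vert n d x
  have hyb : b + v = y := horiz_add_vert n d y
  have hau : (inner ℝ a u : ℝ) = 0 := inner_horiz_vert n d x x
  have hbv : (inner ℝ b v : ℝ) = 0 := inner_horiz_vert n d y y
  have hα : 0 < ‖a‖ := by
    rcases (norm_nonneg a).lt_or_eq with h | h
    · exact h
    · exfalso
      have ha0 : a = 0 := norm_eq_zero.mp h.symm
      have hu0 : u = 0 := norm_eq_zero.mp (le_antisymm (by simpa [← h] using hxs) (norm_nonneg u))
      exact hx (by rw [← hxa, ha0, hu0, add_zero])
  have hβ : 0 < ‖b‖ := by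
    rcases (norm_nonneg b).lt_or_eq with h | h
    · exact h
    · exfalso
      have hb0 : b = 0 := norm_eq_zero.mp h.symm
      have hv0 : v = 0 := norm_eq_zero.mp (le_antisymm (by simpa [← h] using hys) (norm_nonneg v))
      exact hy (by rw [← hyb, hb0, hv0, add_zero])
  have hx2 : ‖x‖ ^ 2 = ‖a‖ ^ 2 + ‖u‖ ^ 2 := by
    rw [← hxa, norm_add_sq_real, hau]; ring
  have hy2 : ‖y‖ ^ 2 = ‖b‖ ^ 2 + ‖v‖ ^ 2 := by
    rw [← hyb, norm_add_sq_real, hbv]; ring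
  have hD2 : ‖a - b‖ ^ 2 = ‖a‖ ^ 2 - 2 * (inner ℝ a b : ℝ) + ‖b‖ ^ 2 := norm_sub_sq_real a b
  have hCS : (inner ℝ a b : ℝ) ≤ ‖a‖ * ‖b‖ := real_inner_le_norm a b
  have hR2 : ‖(‖x‖ / ‖a‖) • a - (‖y‖ / ‖b‖) • b‖ ^ 2
      = ‖x‖ ^ 2 + ‖y‖ ^ 2 - 2 * ((‖x‖ * ‖y‖) / (‖a‖ * ‖b‖)) * (inner ℝ a b : ℝ) := by
    rw [norm_sub_sq_real, real_inner_smul_left, real_inner_smul_right, norm_smul, norm_smul,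
      Real.norm_eq_abs, Real.norm_eq_abs, abs_of_nonneg (by positivity),
      abs_of_nonneg (by positivity)]
    field_simp
    ring
  exact stmt2_aux s ‖x‖ ‖y‖ ‖a‖ ‖b‖ ‖u‖ ‖v‖ ‖u - v‖ ‖a - b‖ (inner ℝ a b)
    ‖(‖x‖ / ‖a‖) • a - (‖y‖ / ‖b‖) • b‖ hs0 hs1 hα hβ (norm_nonneg _) (norm_nonneg _)
    (norm_nonneg _) (norm_nonneg _) (norm_nonneg _) (norm_nonneg _) hx2 hy2 hD2 hCS hR2
    hxs hys hxys (abs_norm_sub_norm_le a b) (abs_norm_sub_norm_le u v)
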